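/- Let Λ = ℚ[p_1, p_2, …] be the polynomial ring over ℚ in countably many variables p_k indexed by positive integers. Define e_m ∈ Λ by e_0 = 1 and the Newton recurrence m·e_m = Σ_{i=1}^m (−1)^{i−1} p_i·e_{m−i} for m ≥ 1, and for n ≥ 1 let D_n be the unique ℚ-linear derivation of Λ with D_n(p_k) = k^n for all k ≥ 1. Then for all n ≥ 1 and m ≥ 1, D_n(e_m) = Σ_{k=1}^m (−1)^{k+1} k^{n−1}·e_{m−k}. -/

import Mathlib

open MvPolynomial

/-- The derivation `D_n` of `Λ = ℚ[p_1, p_2, …]` with `D_n(p_k) = k^n` for all `k ≥ 1`. -/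
noncomputable def Dn (n : ℕ) : Derivation ℚ (MvPolynomial ℕ+ ℚ) (MvPolynomial ℕ+ ℚ) :=
  mkDerivation ℚ fun k : ℕ+ => C (((k : ℕ) : ℚ) ^ n)

lemma Dn_X (n : ℕ) (j : ℕ+) : Dn n (X j) = C (((j:ℕ):ℚ)^n) := by
  simp [Dn, mkDerivation_X]

lemma Dn_C_mul (n : ℕ) (a : ℚ) (p : MvPolynomial ℕ+ ℚ) :
    Dn n (C a * p) = C a * Dn n p := by
  rw [← smul_eq_C_mul, Derivation.map_smul, smul_eq_C_mul]

lemma sum_Icc_one {α : Type*} [AddCommMonoid α] (m : ℕ) (f : ℕ → α) :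
    ∑ k ∈ Finset.Icc 1 m, f k = ∑ i ∈ Finset.range m, f (i+1) := by
  rw [← Finset.Ico_add_one_right_eq_Icc, Finset.sum_Ico_eq_sum_range]
  simp [add_comm]

/-- If `e_0 = 1` and `m·e_m = Σ_{i=1}^m (-1)^{i-1}·p_i·e_{m-i}` for `m ≥ 1` (the signed Newton
recurrence, which characterizes the elementary symmetric functions in the power-sum generators),
then `D_n(e_m) = Σ_{k=1}^m (-1)^{k+1}·k^{n-1}·e_{m-k}` for all `n, m ≥ 1`. -/
theorem stmt4 (E : ℕ → MvPolynomial ℕ+ ℚ) (E0 : E 0 = 1)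
    (Erec : ∀ m : ℕ, 1 ≤ m → (m : ℚ) • E m =
      ∑ i ∈ Finset.range m, C ((-1 : ℚ) ^ i) * (X i.succPNat * E (m - (i + 1))))
    (n m : ℕ) (hn : 1 ≤ n) (hm : 1 ≤ m) :
    Dn n (E m) =
      ∑ k ∈ Finset.Icc 1 m, C ((-1 : ℚ) ^ (k + 1) * (k : ℚ) ^ (n - 1)) * E (m - k) := by
  suffices key : ∀ M : ℕ, Dn n (E M) =
      ∑ k ∈ Finset.Icc 1 M, C ((-1 : ℚ) ^ (k + 1) * (k : ℚ) ^ (n - 1)) * E (M - k) from key m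
  intro M
  induction M using Nat.strong_induction_on with
  | _ M IH =>
  rcases Nat.eq_zero_or_pos M with h0 | hM
  · subst h0; simp [E0]
  have Erec' : ∀ r : ℕ, (r:ℚ) • E r =
      ∑ i ∈ Finset.range r, C ((-1:ℚ)^i) * (X i.succPNat * E (r - (i+1))) := by
    intro r
    rcases Nat.eq_zero_or_pos r with h | h
    · subst h; simp
    · exact Erec r h
  have h1 := congrArg (Dn n) (Erec M hM)
  rw [Derivation.map_smul, map_sum] at h1
  have h2 : ∀ i ∈ Finset.range M,
      Dn n (C ((-1:ℚ)^i) * (X i.succPNat * E (M - (i+1)))) =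
        C ((-1:ℚ)^i * ((i:ℚ)+1)^n) * E (M-(i+1))
        + C ((-1:ℚ)^i) * (X i.succPNat *
            ∑ k ∈ Finset.Icc 1 (M-(i+1)), C ((-1:ℚ)^(k+1) * (k:ℚ)^(n-1)) * E (M-(i+1)-k)) := by
    intro i hi
    rw [Dn_C_mul, Derivation.leibniz, Dn_X, IH (M-(i+1)) (by simp only [Finset.mem_range] at hi; omega)]
    simp only [smul_eq_mul, Nat.succPNat_coe]
    push_cast
    rw [C_mul]
    ring
  rw [Finset.sum_congr rfl h2, Finset.sum_add_distrib] at h1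
  have hA : ∑ i ∈ Finset.range M, C ((-1:ℚ)^i * ((i:ℚ)+1)^n) * E (M-(i+1))
      = ∑ k ∈ Finset.Icc 1 M, C ((-1:ℚ)^(k+1) * (k:ℚ)^n) * E (M-k) := by
    rw [sum_Icc_one]
    apply Finset.sum_congr rfl
    intro i hi
    have he : (-1:ℚ)^(i+1+1) = (-1:ℚ)^i := by ring
    rw [he]
    push_cast
    ring_nf
  have hB : (∑ i ∈ Finset.range M, C ((-1:ℚ)^i) * (X i.succPNat *
      ∑ k ∈ Finset.Icc 1 (M-(i+1)), C ((-1:ℚ)^(k+1) * (k:ℚ)^(n-1)) * E (M-(i+1)-k)))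
      = ∑ k ∈ Finset.Icc 1 M, C ((-1:ℚ)^(k+1) * (k:ℚ)^(n-1)) * (C (((M-k : ℕ)):ℚ) * E (M-k)) := by
    have hswap : (∑ i ∈ Finset.range M, ∑ k ∈ Finset.Icc 1 (M-(i+1)),
        C ((-1:ℚ)^i) * (X i.succPNat * (C ((-1:ℚ)^(k+1) * (k:ℚ)^(n-1)) * E (M-(i+1)-k))))
        = ∑ k ∈ Finset.Icc 1 M, ∑ i ∈ Finset.range (M-k),
        C ((-1:ℚ)^i) * (X i.succPNat * (C ((-1:ℚ)^(k+1) * (k:ℚ)^(n-1)) * E (M-(i+1)-k))) := by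
      apply Finset.sum_comm'
      intro i k
      simp only [Finset.mem_range, Finset.mem_Icc]
      omega
    calc (∑ i ∈ Finset.range M, C ((-1:ℚ)^i) * (X i.succPNat *
          ∑ k ∈ Finset.Icc 1 (M-(i+1)), C ((-1:ℚ)^(k+1) * (k:ℚ)^(n-1)) * E (M-(i+1)-k)))
        = ∑ i ∈ Finset.range M, ∑ k ∈ Finset.Icc 1 (M-(i+1)),
          C ((-1:ℚ)^i) * (X i.succPNat * (C ((-1:ℚ)^(k+1) * (k:ℚ)^(n-1)) * E (M-(i+1)-k))) := by
          apply Finset.sum_congr rfl; intro i _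
          rw [Finset.mul_sum, Finset.mul_sum]
      _ = ∑ k ∈ Finset.Icc 1 M, ∑ i ∈ Finset.range (M-k),
          C ((-1:ℚ)^i) * (X i.succPNat * (C ((-1:ℚ)^(k+1) * (k:ℚ)^(n-1)) * E (M-(i+1)-k))) := hswap
      _ = ∑ k ∈ Finset.Icc 1 M, C ((-1:ℚ)^(k+1) * (k:ℚ)^(n-1)) * (C (((M-k : ℕ)):ℚ) * E (M-k)) := by
          apply Finset.sum_congr rfl; intro k hk
          have : (∑ i ∈ Finset.range (M-k),
              C ((-1:ℚ)^i) * (X i.succPNat * (C ((-1:ℚ)^(k+1) * (k:ℚ)^(n-1)) * E (M-(i+1)-k))))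
              = C ((-1:ℚ)^(k+1) * (k:ℚ)^(n-1)) *
                ∑ i ∈ Finset.range (M-k), C ((-1:ℚ)^i) * (X i.succPNat * E ((M-k) - (i+1))) := by
            rw [Finset.mul_sum]
            apply Finset.sum_congr rfl; intro i _
            have hidx : M - (i+1) - k = (M-k) - (i+1) := by omega
            rw [hidx]; ring
          rw [this, ← Erec' (M-k), smul_eq_C_mul]
  rw [hA, hB] at h1
  have h4 : (∑ k ∈ Finset.Icc 1 M, C ((-1:ℚ)^(k+1) * (k:ℚ)^n) * E (M-k))
      + (∑ k ∈ Finset.Icc 1 M, C ((-1:ℚ)^(k+1) * (k:ℚ)^(n-1)) * (C (((M-k : ℕ)):ℚ) * E (M-k)))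
      = (M:ℚ) • ∑ k ∈ Finset.Icc 1 M, C ((-1:ℚ)^(k+1) * (k:ℚ)^(n-1)) * E (M-k) := by
    rw [Finset.smul_sum, ← Finset.sum_add_distrib]
    apply Finset.sum_congr rfl
    intro k hk
    simp only [Finset.mem_Icc] at hk
    have hcast : ((M - k : ℕ) : ℚ) = (M:ℚ) - (k:ℚ) := by
      push_cast [hk.2]; ring
    obtain ⟨n', rfl⟩ : ∃ n', n = n' + 1 := ⟨n-1, by omega⟩
    rw [smul_eq_C_mul, hcast, ← mul_assoc, ← mul_assoc, ← C_mul, ← C_mul, ← add_mul, ← C_add]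
    congr 1
    simp only [Nat.add_sub_cancel]
    ring
  rw [h4] at h1
  have hMne : (M:ℚ) ≠ 0 := Nat.cast_ne_zero.mpr (by omega)
  have h5 := congrArg (fun x => (M:ℚ)⁻¹ • x) h1
  simpa [inv_smul_smul₀ hMne] using h5
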